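/- Let M be an Hadamard manifold and suppose G^{β*,ξ*}(p*) := E[ρ(X,p*;β*,ξ*)] < ∞ for some β* ∈ [0,1), ξ* ∈ ∂M, p* ∈ M. Then for every β ∈ [0,1) and ξ ∈ ∂M, the function G^{β,ξ}(p) = E[ρ(X,p;β,ξ)] is finite and continuous on all of M. -/

import Mathlib

open MeasureTheory
open scoped RealInnerProductSpace

/-- Let `M` be an Hadamard manifold (here: a metric space with a globally
defined inverse exponential map `log` satisfying `‖log_p x‖ = d(p,x)`, jointly continuous,
and with continuous unit radial fields `dir ξ : M → T M` indexed by the boundary points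
`ξ ∈ ∂M =: Ξ`).  Let `X` be an `M`-valued random element with law `μ`, and suppose
`G^{β*,ξ*}(p*) = E[ρ(X,p*;β*,ξ*)] < ∞` for some `β* ∈ [0,1)`, `ξ* ∈ Ξ`, `p* ∈ M`, where
`ρ(x,p;β,ξ) = ‖log_p x‖ + ⟪β·(dir ξ p), log_p x⟫`.  Then for every `β ∈ [0,1)` and
`ξ ∈ Ξ`, the function `G^{β,ξ}(p) = E[ρ(X,p;β,ξ)]` is finite (the integrand is
integrable) and continuous on all of `M`. -/
theorem quantile_objective_finite_continuous
    {M : Type*} [MetricSpace M] [MeasurableSpace M] [BorelSpace M]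
    {E : Type*} [NormedAddCommGroup E] [InnerProductSpace ℝ E]
    {Ξ : Type*} (log : M → M → E) (dir : Ξ → M → E)
    (hlog : Continuous fun q : M × M => log q.1 q.2)
    (hnorm : ∀ p x : M, ‖log p x‖ = dist p x)
    (hdir : ∀ ξ : Ξ, Continuous (dir ξ))
    (hdirunit : ∀ (ξ : Ξ) (p : M), ‖dir ξ p‖ = 1)
    (μ : Measure M) [IsProbabilityMeasure μ]
    (βs : ℝ) (hβs0 : 0 ≤ βs) (hβs1 : βs < 1) (ξs : Ξ) (ps : M)
    (hfin : Integrable (fun x => ‖log ps x‖ + ⟪βs • dir ξs ps, log ps x⟫) μ) :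
    ∀ β : ℝ, 0 ≤ β → β < 1 → ∀ ξ : Ξ,
      (∀ p : M, Integrable (fun x => ‖log p x‖ + ⟪β • dir ξ p, log p x⟫) μ) ∧
        Continuous fun p : M => ∫ x, (‖log p x‖ + ⟪β • dir ξ p, log p x⟫) ∂μ := by
  -- pointwise bounds on the integrand
  have habs : ∀ (β : ℝ), 0 ≤ β → ∀ (ξ : Ξ) (p x : M),
      |‖log p x‖ + ⟪β • dir ξ p, log p x⟫| ≤ (1 + β) * dist p x := by
    intro β hβ ξ p x
    have h1 : |⟪β • dir ξ p, log p x⟫| ≤ β * ‖log p x‖ := by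
      calc |⟪β • dir ξ p, log p x⟫| ≤ ‖β • dir ξ p‖ * ‖log p x‖ :=
            abs_real_inner_le_norm _ _
        _ = β * ‖log p x‖ := by
            rw [norm_smul, hdirunit, Real.norm_eq_abs, abs_of_nonneg hβ, mul_one]
    calc |‖log p x‖ + ⟪β • dir ξ p, log p x⟫|
        ≤ |‖log p x‖| + |⟪β • dir ξ p, log p x⟫| := abs_add_le _ _
      _ ≤ ‖log p x‖ + β * ‖log p x‖ := by
          rw [abs_of_nonneg (norm_nonneg _)]; exact add_le_add_right h1 _
      _ = (1 + β) * dist p x := by rw [hnorm]; ring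
  -- measurability of the integrand for each fixed p
  have hmeas : ∀ (β : ℝ) (ξ : Ξ) (p : M),
      AEStronglyMeasurable (fun x => ‖log p x‖ + ⟪β • dir ξ p, log p x⟫) μ := by
    intro β ξ p
    have hc : Continuous fun x : M => log p x :=
      hlog.comp (continuous_const.prodMk continuous_id)
    exact (hc.norm.add ((continuous_const.inner hc))).aestronglyMeasurable
  -- the distance to ps is integrable
  have hdistps : Integrable (fun x => dist ps x) μ := by
    have hlow : ∀ x, dist ps x ≤
        (1 - βs)⁻¹ * (‖log ps x‖ + ⟪βs • dir ξs ps, log ps x⟫) := by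
      intro x
      have h1 : |⟪βs • dir ξs ps, log ps x⟫| ≤ βs * ‖log ps x‖ := by
        calc |⟪βs • dir ξs ps, log ps x⟫| ≤ ‖βs • dir ξs ps‖ * ‖log ps x‖ :=
              abs_real_inner_le_norm _ _
          _ = βs * ‖log ps x‖ := by
              rw [norm_smul, hdirunit, Real.norm_eq_abs, abs_of_nonneg hβs0, mul_one]
      have h2 : (1 - βs) * dist ps x ≤ ‖log ps x‖ + ⟪βs • dir ξs ps, log ps x⟫ := by
        have := neg_abs_le (⟪βs • dir ξs ps, log ps x⟫)
        nlinarith [hnorm ps x, dist_nonneg (x := ps) (y := x)]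
      have hpos : (0:ℝ) < 1 - βs := by linarith
      calc dist ps x = (1 - βs)⁻¹ * ((1 - βs) * dist ps x) := by
            field_simp
        _ ≤ (1 - βs)⁻¹ * (‖log ps x‖ + ⟪βs • dir ξs ps, log ps x⟫) := by
            apply mul_le_mul_of_nonneg_left h2 (le_of_lt (inv_pos.mpr hpos))
    refine (hfin.const_mul ((1 - βs)⁻¹)).mono
      (continuous_const.dist continuous_id).aestronglyMeasurable ?_
    filter_upwards with x
    have h0 : 0 ≤ dist ps x := dist_nonneg
    rw [Real.norm_eq_abs, Real.norm_eq_abs, abs_of_nonneg h0]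
    exact (hlow x).trans (le_abs_self _)
  -- the distance to any p is integrable
  have hdist : ∀ p : M, Integrable (fun x => dist p x) μ := by
    intro p
    have : Integrable (fun x => dist p ps + dist ps x) μ :=
      (integrable_const _).add hdistps
    refine this.mono (continuous_const.dist continuous_id).aestronglyMeasurable ?_
    filter_upwards with x
    rw [Real.norm_eq_abs, Real.norm_eq_abs, abs_of_nonneg dist_nonneg,
      abs_of_nonneg (by positivity)]
    exact dist_triangle p ps x
  intro β hβ0 hβ1 ξ
  have hint : ∀ p : M,
      Integrable (fun x => ‖log p x‖ + ⟪β • dir ξ p, log p x⟫) μ := by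
    intro p
    refine ((hdist p).const_mul (1 + β)).mono (hmeas β ξ p) ?_
    filter_upwards with x
    rw [Real.norm_eq_abs, Real.norm_eq_abs,
      abs_of_nonneg (by positivity : (0:ℝ) ≤ (1 + β) * dist p x)]
    exact habs β hβ0 ξ p x
  refine ⟨hint, ?_⟩
  rw [continuous_iff_continuousAt]
  intro p0
  refine continuousAt_of_dominated (F := fun p x => ‖log p x‖ + ⟪β • dir ξ p, log p x⟫)
    (bound := fun x => (1 + β) * (1 + dist p0 x)) ?_ ?_ ?_ ?_
  · exact Filter.Eventually.of_forall fun p => hmeas β ξ p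
  · filter_upwards [Metric.ball_mem_nhds p0 one_pos] with p hp
    filter_upwards with x
    rw [Real.norm_eq_abs]
    refine (habs β hβ0 ξ p x).trans ?_
    have h1 : dist p x ≤ 1 + dist p0 x := by
      have := dist_triangle p p0 x
      have h2 : dist p p0 < 1 := Metric.mem_ball.mp hp
      linarith
    have : (0:ℝ) ≤ 1 + β := by linarith
    nlinarith
  · exact ((integrable_const (1:ℝ)).add (hdist p0)).const_mul (1 + β)
  · filter_upwards with x
    have hc : Continuous fun p : M => log p x :=
      hlog.comp (continuous_id.prodMk continuous_const)
    exact (hc.norm.add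
      ((((hdir ξ).const_smul β).inner hc))).continuousAt
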